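/- In the 3-dimensional unimodular Lie algebra with orthonormal basis (e₁,e₂,e₃) and brackets [e₁,e₂] = α e₃, [e₁,e₃] = β e₂, [e₂,e₃] = γ e₁, let φ be the linear map φ(X) = −∇_X e₃ (Levi-Civita connection via the Koszul formula). Then the matrix of φ restricted to span(e₁,e₂) in the basis (e₁,e₂) is −(1/2)·[[0, α+β+γ],[−α+β+γ, 0]], and (∇_{e₁}φ)(e₁) + (∇_{e₂}φ)(e₂) = |φ|² e₃ where |φ|² = ((α+β+γ)² + (α−β−γ)²)/4; i.e., e₃ is a harmonic unit vector field. -/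
import Mathlib


open scoped RealInnerProductSpace

noncomputable def E (i : Fin 3) : EuclideanSpace ℝ (Fin 3) := EuclideanSpace.single i 1

lemma inner_E (v : EuclideanSpace ℝ (Fin 3)) (i : Fin 3) : ⟪v, E i⟫ = v i := by
  simp [E, EuclideanSpace.inner_single_right]

lemma ext3 (v w : EuclideanSpace ℝ (Fin 3)) (h0 : ⟪v, E 0⟫ = ⟪w, E 0⟫)
    (h1 : ⟪v, E 1⟫ = ⟪w, E 1⟫) (h2 : ⟪v, E 2⟫ = ⟪w, E 2⟫) : v = w := by
  rw [inner_E, inner_E] at h0 h1 h2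
  ext i
  fin_cases i
  · exact h0
  · exact h1
  · exact h2

lemma inner_EE (i j : Fin 3) : ⟪E i, E j⟫ = if i = j then (1:ℝ) else 0 := by
  rw [inner_E]
  simp [E, EuclideanSpace.single_apply, eq_comm]


lemma e00 : ⟪E 0, E 0⟫ = (1:ℝ) := by rw [inner_EE]; norm_num [Fin.ext_iff]
lemma e01 : ⟪E 0, E 1⟫ = (0:ℝ) := by rw [inner_EE]; norm_num [Fin.ext_iff]
lemma e02 : ⟪E 0, E 2⟫ = (0:ℝ) := by rw [inner_EE]; norm_num [Fin.ext_iff]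
lemma e10 : ⟪E 1, E 0⟫ = (0:ℝ) := by rw [inner_EE]; norm_num [Fin.ext_iff]
lemma e11 : ⟪E 1, E 1⟫ = (1:ℝ) := by rw [inner_EE]; norm_num [Fin.ext_iff]
lemma e12 : ⟪E 1, E 2⟫ = (0:ℝ) := by rw [inner_EE]; norm_num [Fin.ext_iff]
lemma e20 : ⟪E 2, E 0⟫ = (0:ℝ) := by rw [inner_EE]; norm_num [Fin.ext_iff]
lemma e21 : ⟪E 2, E 1⟫ = (0:ℝ) := by rw [inner_EE]; norm_num [Fin.ext_iff]
lemma e22 : ⟪E 2, E 2⟫ = (1:ℝ) := by rw [inner_EE]; norm_num [Fin.ext_iff]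

theorem unimodular_harmonic_e3 (α β γ : ℝ)
    (Lb : EuclideanSpace ℝ (Fin 3) →ₗ[ℝ] EuclideanSpace ℝ (Fin 3) →ₗ[ℝ] EuclideanSpace ℝ (Fin 3))
    (hanti : ∀ X Y, Lb X Y = -Lb Y X)
    (h12 : Lb (E 0) (E 1) = α • E 2)
    (h13 : Lb (E 0) (E 2) = β • E 1)
    (h23 : Lb (E 1) (E 2) = γ • E 0)
    (nabla : EuclideanSpace ℝ (Fin 3) → EuclideanSpace ℝ (Fin 3) → EuclideanSpace ℝ (Fin 3))
    (hK : ∀ X Y Z, 2 * ⟪nabla X Y, Z⟫ = ⟪Lb X Y, Z⟫ - ⟪Lb Y Z, X⟫ + ⟪Lb Z X, Y⟫)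
    (φ : EuclideanSpace ℝ (Fin 3) → EuclideanSpace ℝ (Fin 3))
    (hφ : ∀ X, φ X = -nabla X (E 2)) :
    φ (E 0) = (-((-α + β + γ) / 2)) • E 1 ∧
    φ (E 1) = (-((α + β + γ) / 2)) • E 0 ∧
    nabla (E 0) (φ (E 0)) - φ (nabla (E 0) (E 0)) +
        (nabla (E 1) (φ (E 1)) - φ (nabla (E 1) (E 1)))
      = (((α + β + γ) ^ 2 + (α - β - γ) ^ 2) / 4) • E 2 := by
  have hz : ∀ X, Lb X X = 0 := by
    intro X
    have h2 : (2:ℝ) • Lb X X = 0 := by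
      rw [two_smul]; nth_rewrite 2 [hanti X X]; simp
    exact (smul_eq_zero.mp h2).resolve_left (by norm_num)
  have h21 : Lb (E 1) (E 0) = -(α • E 2) := by rw [hanti, h12]
  have h31 : Lb (E 2) (E 0) = -(β • E 1) := by rw [hanti, h13]
  have h32 : Lb (E 2) (E 1) = -(γ • E 0) := by rw [hanti, h23]
  have n13 : nabla (E 0) (E 2) = ((-α + β + γ) / 2) • E 1 := by
    refine ext3 _ _ ?_ ?_ ?_
    · have h := hK (E 0) (E 2) (E 0)
      simp only [h12, h13, h23, h21, h31, h32, hz, real_inner_smul_left,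
        real_inner_smul_right, inner_neg_left, inner_neg_right, inner_zero_left,
        inner_zero_right, e00, e01, e02, e10, e11, e12, e20, e21, e22,
        mul_zero, mul_one, add_zero, zero_add, neg_zero, sub_zero, zero_sub, neg_neg] at h ⊢
      linarith
    · have h := hK (E 0) (E 2) (E 1)
      simp only [h12, h13, h23, h21, h31, h32, hz, real_inner_smul_left,
        real_inner_smul_right, inner_neg_left, inner_neg_right, inner_zero_left,
        inner_zero_right, e00, e01, e02, e10, e11, e12, e20, e21, e22,
        mul_zero, mul_one, add_zero, zero_add, neg_zero, sub_zero, zero_sub, neg_neg] at h ⊢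
      linarith
    · have h := hK (E 0) (E 2) (E 2)
      simp only [h12, h13, h23, h21, h31, h32, hz, real_inner_smul_left,
        real_inner_smul_right, inner_neg_left, inner_neg_right, inner_zero_left,
        inner_zero_right, e00, e01, e02, e10, e11, e12, e20, e21, e22,
        mul_zero, mul_one, add_zero, zero_add, neg_zero, sub_zero, zero_sub, neg_neg] at h ⊢
      linarith
  have n23 : nabla (E 1) (E 2) = ((α + β + γ) / 2) • E 0 := by
    refine ext3 _ _ ?_ ?_ ?_
    · have h := hK (E 1) (E 2) (E 0)
      simp only [h12, h13, h23, h21, h31, h32, hz, real_inner_smul_left,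
        real_inner_smul_right, inner_neg_left, inner_neg_right, inner_zero_left,
        inner_zero_right, e00, e01, e02, e10, e11, e12, e20, e21, e22,
        mul_zero, mul_one, add_zero, zero_add, neg_zero, sub_zero, zero_sub, neg_neg] at h ⊢
      linarith
    · have h := hK (E 1) (E 2) (E 1)
      simp only [h12, h13, h23, h21, h31, h32, hz, real_inner_smul_left,
        real_inner_smul_right, inner_neg_left, inner_neg_right, inner_zero_left,
        inner_zero_right, e00, e01, e02, e10, e11, e12, e20, e21, e22,
        mul_zero, mul_one, add_zero, zero_add, neg_zero, sub_zero, zero_sub, neg_neg] at h ⊢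
      linarith
    · have h := hK (E 1) (E 2) (E 2)
      simp only [h12, h13, h23, h21, h31, h32, hz, real_inner_smul_left,
        real_inner_smul_right, inner_neg_left, inner_neg_right, inner_zero_left,
        inner_zero_right, e00, e01, e02, e10, e11, e12, e20, e21, e22,
        mul_zero, mul_one, add_zero, zero_add, neg_zero, sub_zero, zero_sub, neg_neg] at h ⊢
      linarith
  have n12 : nabla (E 0) (E 1) = ((α - β - γ) / 2) • E 2 := by
    refine ext3 _ _ ?_ ?_ ?_
    · have h := hK (E 0) (E 1) (E 0)
      simp only [h12, h13, h23, h21, h31, h32, hz, real_inner_smul_left,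
        real_inner_smul_right, inner_neg_left, inner_neg_right, inner_zero_left,
        inner_zero_right, e00, e01, e02, e10, e11, e12, e20, e21, e22,
        mul_zero, mul_one, add_zero, zero_add, neg_zero, sub_zero, zero_sub, neg_neg] at h ⊢
      linarith
    · have h := hK (E 0) (E 1) (E 1)
      simp only [h12, h13, h23, h21, h31, h32, hz, real_inner_smul_left,
        real_inner_smul_right, inner_neg_left, inner_neg_right, inner_zero_left,
        inner_zero_right, e00, e01, e02, e10, e11, e12, e20, e21, e22,
        mul_zero, mul_one, add_zero, zero_add, neg_zero, sub_zero, zero_sub, neg_neg] at h ⊢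
      linarith
    · have h := hK (E 0) (E 1) (E 2)
      simp only [h12, h13, h23, h21, h31, h32, hz, real_inner_smul_left,
        real_inner_smul_right, inner_neg_left, inner_neg_right, inner_zero_left,
        inner_zero_right, e00, e01, e02, e10, e11, e12, e20, e21, e22,
        mul_zero, mul_one, add_zero, zero_add, neg_zero, sub_zero, zero_sub, neg_neg] at h ⊢
      linarith
  have n21 : nabla (E 1) (E 0) = ((-α - β - γ) / 2) • E 2 := by
    refine ext3 _ _ ?_ ?_ ?_
    · have h := hK (E 1) (E 0) (E 0)
      simp only [h12, h13, h23, h21, h31, h32, hz, real_inner_smul_left,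
        real_inner_smul_right, inner_neg_left, inner_neg_right, inner_zero_left,
        inner_zero_right, e00, e01, e02, e10, e11, e12, e20, e21, e22,
        mul_zero, mul_one, add_zero, zero_add, neg_zero, sub_zero, zero_sub, neg_neg] at h ⊢
      linarith
    · have h := hK (E 1) (E 0) (E 1)
      simp only [h12, h13, h23, h21, h31, h32, hz, real_inner_smul_left,
        real_inner_smul_right, inner_neg_left, inner_neg_right, inner_zero_left,
        inner_zero_right, e00, e01, e02, e10, e11, e12, e20, e21, e22,
        mul_zero, mul_one, add_zero, zero_add, neg_zero, sub_zero, zero_sub, neg_neg] at h ⊢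
      linarith
    · have h := hK (E 1) (E 0) (E 2)
      simp only [h12, h13, h23, h21, h31, h32, hz, real_inner_smul_left,
        real_inner_smul_right, inner_neg_left, inner_neg_right, inner_zero_left,
        inner_zero_right, e00, e01, e02, e10, e11, e12, e20, e21, e22,
        mul_zero, mul_one, add_zero, zero_add, neg_zero, sub_zero, zero_sub, neg_neg] at h ⊢
      linarith
  have n11 : nabla (E 0) (E 0) = 0 := by
    refine ext3 _ _ ?_ ?_ ?_
    · have h := hK (E 0) (E 0) (E 0)
      simp only [h12, h13, h23, h21, h31, h32, hz, real_inner_smul_left,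
        real_inner_smul_right, inner_neg_left, inner_neg_right, inner_zero_left,
        inner_zero_right, e00, e01, e02, e10, e11, e12, e20, e21, e22,
        mul_zero, mul_one, add_zero, zero_add, neg_zero, sub_zero, zero_sub, neg_neg] at h ⊢
      linarith
    · have h := hK (E 0) (E 0) (E 1)
      simp only [h12, h13, h23, h21, h31, h32, hz, real_inner_smul_left,
        real_inner_smul_right, inner_neg_left, inner_neg_right, inner_zero_left,
        inner_zero_right, e00, e01, e02, e10, e11, e12, e20, e21, e22,
        mul_zero, mul_one, add_zero, zero_add, neg_zero, sub_zero, zero_sub, neg_neg] at h ⊢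
      linarith
    · have h := hK (E 0) (E 0) (E 2)
      simp only [h12, h13, h23, h21, h31, h32, hz, real_inner_smul_left,
        real_inner_smul_right, inner_neg_left, inner_neg_right, inner_zero_left,
        inner_zero_right, e00, e01, e02, e10, e11, e12, e20, e21, e22,
        mul_zero, mul_one, add_zero, zero_add, neg_zero, sub_zero, zero_sub, neg_neg] at h ⊢
      linarith
  have n22 : nabla (E 1) (E 1) = 0 := by
    refine ext3 _ _ ?_ ?_ ?_
    · have h := hK (E 1) (E 1) (E 0)
      simp only [h12, h13, h23, h21, h31, h32, hz, real_inner_smul_left,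
        real_inner_smul_right, inner_neg_left, inner_neg_right, inner_zero_left,
        inner_zero_right, e00, e01, e02, e10, e11, e12, e20, e21, e22,
        mul_zero, mul_one, add_zero, zero_add, neg_zero, sub_zero, zero_sub, neg_neg] at h ⊢
      linarith
    · have h := hK (E 1) (E 1) (E 1)
      simp only [h12, h13, h23, h21, h31, h32, hz, real_inner_smul_left,
        real_inner_smul_right, inner_neg_left, inner_neg_right, inner_zero_left,
        inner_zero_right, e00, e01, e02, e10, e11, e12, e20, e21, e22,
        mul_zero, mul_one, add_zero, zero_add, neg_zero, sub_zero, zero_sub, neg_neg] at h ⊢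
      linarith
    · have h := hK (E 1) (E 1) (E 2)
      simp only [h12, h13, h23, h21, h31, h32, hz, real_inner_smul_left,
        real_inner_smul_right, inner_neg_left, inner_neg_right, inner_zero_left,
        inner_zero_right, e00, e01, e02, e10, e11, e12, e20, e21, e22,
        mul_zero, mul_one, add_zero, zero_add, neg_zero, sub_zero, zero_sub, neg_neg] at h ⊢
      linarith
  have n0 : ∀ Y, nabla 0 Y = 0 := by
    intro Y
    refine ext3 _ _ ?_ ?_ ?_
    · have h := hK 0 Y (E 0)
      simp only [map_zero, LinearMap.zero_apply, inner_zero_left, inner_zero_right] at h ⊢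
      linarith
    · have h := hK 0 Y (E 1)
      simp only [map_zero, LinearMap.zero_apply, inner_zero_left, inner_zero_right] at h ⊢
      linarith
    · have h := hK 0 Y (E 2)
      simp only [map_zero, LinearMap.zero_apply, inner_zero_left, inner_zero_right] at h ⊢
      linarith
  have hsmul : ∀ X Y (c : ℝ), nabla X (c • Y) = c • nabla X Y := by
    intro X Y c
    refine ext3 _ _ ?_ ?_ ?_
    · have h1 := hK X (c • Y) (E 0)
      have h2 := hK X Y (E 0)
      simp only [map_smul, LinearMap.smul_apply, real_inner_smul_left,
        real_inner_smul_right] at h1 ⊢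
      linear_combination h1 / 2 - c / 2 * h2
    · have h1 := hK X (c • Y) (E 1)
      have h2 := hK X Y (E 1)
      simp only [map_smul, LinearMap.smul_apply, real_inner_smul_left,
        real_inner_smul_right] at h1 ⊢
      linear_combination h1 / 2 - c / 2 * h2
    · have h1 := hK X (c • Y) (E 2)
      have h2 := hK X Y (E 2)
      simp only [map_smul, LinearMap.smul_apply, real_inner_smul_left,
        real_inner_smul_right] at h1 ⊢
      linear_combination h1 / 2 - c / 2 * h2
  have φ1 : φ (E 0) = (-((-α + β + γ) / 2)) • E 1 := by
    rw [hφ, n13, ← neg_smul]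
  have φ2 : φ (E 1) = (-((α + β + γ) / 2)) • E 0 := by
    rw [hφ, n23, ← neg_smul]
  refine ⟨φ1, φ2, ?_⟩
  rw [φ1, φ2, hsmul, hsmul, n12, n21, n11, n22, hφ 0, n0 (E 2)]
  simp only [neg_zero, sub_zero, smul_smul]
  rw [← add_smul]
  congr 1
  ring
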